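/- Reflexivity and transitivity of syntactic subtyping: (1) t ≤ t and s ≤ s for all positive type names t and negative type names s defined in the signature Σ; (2) if t₁ ≤ t₂ and t₂ ≤ t₃ then t₁ ≤ t₃; (3) if s₁ ≤ s₂ and s₂ ≤ s₃ then s₁ ≤ s₃. -/

import Mathlib

namespace CBPV

abbrev Label := String
abbrev Var := String

-- Positive types (values); `name` refers to an equirecursively defined type name.
mutual
inductive PosTp : Type where
  | name : String → PosTp
  | str  : PosStr → PosTp

/-- Structural positive types. -/
inductive PosStr : Type where
  | tensor : PosTp → PosTp → PosStr
  | one    : PosStr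
  | plus   : List (Label × PosTp) → PosStr
  | down   : NegTp → PosStr

/-- Negative types (computations). -/
inductive NegTp : Type where
  | name : String → NegTp
  | str  : NegStr → NegTp

/-- Structural negative types. -/
inductive NegStr : Type where
  | arrow   : PosTp → NegTp → NegStr
  | withRec : List (Label × NegTp) → NegStr
  | up      : PosTp → NegStr
end

mutual
/-- Values. -/
inductive Val : Type where
  | var   : Var → Val
  | pair  : Val → Val → Val
  | unit  : Val
  | inj   : Label → Val → Val
  | thunk : Comp → Val

/-- Computations. -/
inductive Comp : Type where
  | lam       : Var → Comp → Comp
  | app       : Comp → Val → Comp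
  | record    : List (Label × Comp) → Comp
  | proj      : Comp → Label → Comp
  | ret       : Val → Comp
  | letret    : Var → Comp → Comp → Comp
  | name      : String → Comp
  | matchPair : Val → Var → Var → Comp → Comp
  | matchUnit : Val → Comp → Comp
  | matchSum  : Val → List (Label × Var × Comp) → Comp
  | force     : Val → Comp
end

/-- A global signature: equirecursive (contractive) type definitions `t = τ⁺`,
`s = σ⁻`, and recursive expression definitions `f : σ⁻ = e`. -/
structure Signature : Type where
  pos  : String → PosStr
  neg  : String → NegStr
  defs : String → NegTp × Comp

mutual
/-- Substitution of value `w` for variable `x` in a value. -/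
def substV (w : Val) (x : Var) : Val → Val
  | .var y => if y = x then w else .var y
  | .pair v₁ v₂ => .pair (substV w x v₁) (substV w x v₂)
  | .unit => .unit
  | .inj j v => .inj j (substV w x v)
  | .thunk e => .thunk (substC w x e)

/-- Substitution of value `w` for variable `x` in a computation. -/
def substC (w : Val) (x : Var) : Comp → Comp
  | .lam y e => .lam y (if y = x then e else substC w x e)
  | .app e v => .app (substC w x e) (substV w x v)
  | .record L => .record (substRec w x L)
  | .proj e j => .proj (substC w x e) j
  | .ret v => .ret (substV w x v)
  | .letret y e₁ e₂ => .letret y (substC w x e₁) (if y = x then e₂ else substC w x e₂)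
  | .name f => .name f
  | .matchPair v y z e =>
      .matchPair (substV w x v) y z (if y = x ∨ z = x then e else substC w x e)
  | .matchUnit v e => .matchUnit (substV w x v) (substC w x e)
  | .matchSum v B => .matchSum (substV w x v) (substBr w x B)
  | .force v => .force (substV w x v)

def substRec (w : Val) (x : Var) : List (Label × Comp) → List (Label × Comp)
  | [] => []
  | (l, e) :: rest => (l, substC w x e) :: substRec w x rest

def substBr (w : Val) (x : Var) : List (Label × Var × Comp) → List (Label × Var × Comp)
  | [] => []
  | (l, y, e) :: rest =>
      (l, y, if y = x then e else substC w x e) :: substBr w x rest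
end

/-- Terminal computations. -/
inductive Terminal : Comp → Prop where
  | lam    : Terminal (.lam x e)
  | record : Terminal (.record L)
  | ret    : Terminal (.ret v)

/-- Small-step dynamics of call-by-push-value, relative to a signature. -/
inductive Step (Sg : Signature) : Comp → Comp → Prop where
  | beta       : Step Sg (.app (.lam x e) v) (substC v x e)
  | app        : Step Sg e e' → Step Sg (.app e v) (.app e' v)
  | letretBeta : Step Sg (.letret x (.ret v) e₂) (substC v x e₂)
  | letretStep : Step Sg e₁ e₁' → Step Sg (.letret x e₁ e₂) (.letret x e₁' e₂)
  | projBeta   : L.lookup j = some e → Step Sg (.proj (.record L) j) e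
  | projStep   : Step Sg e e' → Step Sg (.proj e j) (.proj e' j)
  | matchPair  : Step Sg (.matchPair (.pair v₁ v₂) x y e) (substC v₁ x (substC v₂ y e))
  | matchUnit  : Step Sg (.matchUnit .unit e) e
  | matchSum   : B.lookup j = some (x, ej) → Step Sg (.matchSum (.inj j v) B) (substC v x ej)
  | force      : Step Sg (.force (.thunk e)) e
  | name       : Sg.defs f = (σ, e) → Step Sg (.name f) e

end CBPV

namespace CBPV

def PosTp.IsName : PosTp → Prop := fun τ => ∃ t, τ = .name t
def NegTp.IsName : NegTp → Prop := fun σ => ∃ s, σ = .name s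

/-- A structural positive type is in normal form if all of its components are
type names, and its label lists have no duplicate labels. -/
def PosStrNormal : PosStr → Prop
  | .tensor τ₁ τ₂ => τ₁.IsName ∧ τ₂.IsName
  | .one => True
  | .plus L => (∀ p ∈ L, (Prod.snd p).IsName) ∧ (L.map Prod.fst).Nodup
  | .down σ => σ.IsName

def NegStrNormal : NegStr → Prop
  | .arrow τ σ => τ.IsName ∧ σ.IsName
  | .withRec L => (∀ p ∈ L, (Prod.snd p).IsName) ∧ (L.map Prod.fst).Nodup
  | .up τ => τ.IsName

/-- A signature is in normal form when every type definition alternates between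
type names and structural types, i.e. the components of every defined
structural type are themselves type names. -/
def SigNormal (Sg : Signature) : Prop :=
  (∀ t, PosStrNormal (Sg.pos t)) ∧ (∀ s, NegStrNormal (Sg.neg s))

/-- One unfolding of the rules for the emptiness judgment `t empty`. -/
def EmptyUnf (Sg : Signature) (S : String → Prop) (t : String) : Prop :=
  (∃ L, Sg.pos t = .plus L ∧
     ∀ p ∈ L, ∃ tj, Prod.snd p = PosTp.name tj ∧ S tj) ∨
  (∃ t₁ t₂, Sg.pos t = .tensor (.name t₁) (.name t₂) ∧ (S t₁ ∨ S t₂))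

/-- `t empty`: the greatest fixed point (circular derivations) of the
emptiness rules. -/
def TpEmpty (Sg : Signature) (t : String) : Prop :=
  ∃ S : String → Prop, (∀ u, S u → EmptyUnf Sg S u) ∧ S t

/-- `s full`: `s = t₁ → s₂ ∈ Σ` with `t₁ empty`, or `s = &{} ∈ Σ`. -/
def TpFull (Sg : Signature) (s : String) : Prop :=
  (∃ t₁ s₂, Sg.neg s = .arrow (.name t₁) (.name s₂) ∧ TpEmpty Sg t₁) ∨
  Sg.neg s = .withRec []

/-- One unfolding of the rules for positive subtyping `t ≤ u` between
positive type names. -/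
def PosSubUnf (Sg : Signature) (P N : String → String → Prop) (t u : String) : Prop :=
  (∃ t₁ t₂ u₁ u₂, Sg.pos t = .tensor (.name t₁) (.name t₂) ∧
     Sg.pos u = .tensor (.name u₁) (.name u₂) ∧ P t₁ u₁ ∧ P t₂ u₂) ∨
  (Sg.pos t = .one ∧ Sg.pos u = .one) ∨
  (∃ L K, Sg.pos t = .plus L ∧ Sg.pos u = .plus K ∧
     ∀ p ∈ L, ∃ tj, Prod.snd p = PosTp.name tj ∧
       (TpEmpty Sg tj ∨ ∃ uj, K.lookup (Prod.fst p) = some (PosTp.name uj) ∧ P tj uj)) ∨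
  (∃ s r, Sg.pos t = .down (.name s) ∧ Sg.pos u = .down (.name r) ∧ N s r) ∨
  TpEmpty Sg t

/-- One unfolding of the rules for negative subtyping `s ≤ r` between
negative type names. -/
def NegSubUnf (Sg : Signature) (P N : String → String → Prop) (s r : String) : Prop :=
  (∃ t₁ s₂ u₁ r₂, Sg.neg s = .arrow (.name t₁) (.name s₂) ∧
     Sg.neg r = .arrow (.name u₁) (.name r₂) ∧ P u₁ t₁ ∧ N s₂ r₂) ∨
  (∃ t u, Sg.neg s = .up (.name t) ∧ Sg.neg r = .up (.name u) ∧ P t u) ∨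
  (∃ L K, Sg.neg s = .withRec L ∧ Sg.neg r = .withRec K ∧
     ∀ p ∈ K, ∃ rj, Prod.snd p = NegTp.name rj ∧
       ∃ sj, L.lookup (Prod.fst p) = some (NegTp.name sj) ∧ N sj rj) ∨
  (∃ t, Sg.neg s = .up (.name t) ∧ TpEmpty Sg t) ∨
  TpFull Sg r

/-- `t ≤ u`: syntactic subtyping between positive type names, interpreted as
circular derivations (greatest fixed point of the subtyping rules). -/
def PosSub (Sg : Signature) (t u : String) : Prop :=
  ∃ P N : String → String → Prop,
    (∀ a b, P a b → PosSubUnf Sg P N a b) ∧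
    (∀ a b, N a b → NegSubUnf Sg P N a b) ∧ P t u

/-- `s ≤ r`: syntactic subtyping between negative type names, interpreted as
circular derivations (greatest fixed point of the subtyping rules). -/
def NegSub (Sg : Signature) (s r : String) : Prop :=
  ∃ P N : String → String → Prop,
    (∀ a b, P a b → PosSubUnf Sg P N a b) ∧
    (∀ a b, N a b → NegSubUnf Sg P N a b) ∧ N s r

end CBPV

namespace CBPV

section Helpers
variable {Sg : Signature}

lemma lookup_eq_of_mem {α β : Type} [BEq α] [LawfulBEq α] :
    ∀ {l : List (α × β)}, (l.map Prod.fst).Nodup → ∀ {p : α × β}, p ∈ l →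
      l.lookup p.1 = some p.2
  | [], _, _, hp => by simp at hp
  | (k, v) :: es, hnd, p, hp => by
    simp only [List.map_cons, List.nodup_cons] at hnd
    rcases List.mem_cons.mp hp with h | h
    · subst h; simp [List.lookup]
    · have hne : p.1 ≠ k := by
        intro he
        exact hnd.1 (he ▸ List.mem_map_of_mem (f := Prod.fst) h)
      simp only [List.lookup, beq_eq_false_iff_ne.mpr hne]
      exact lookup_eq_of_mem hnd.2 h

lemma mem_of_lookup {α β : Type} [BEq α] [LawfulBEq α] :
    ∀ {l : List (α × β)} {a : α} {b : β}, l.lookup a = some b → (a, b) ∈ l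
  | [], _, _, h => by simp [List.lookup] at h
  | (k, v) :: es, a, b, h => by
    by_cases hk : a = k
    · subst hk
      simp [List.lookup] at h
      subst h; exact List.mem_cons_self
    · simp only [List.lookup, beq_eq_false_iff_ne.mpr hk] at h
      exact List.mem_cons_of_mem _ (mem_of_lookup h)

lemma EmptyUnf.mono {S S' : String → Prop} (h : ∀ x, S x → S' x) {t : String}
    (he : EmptyUnf Sg S t) : EmptyUnf Sg S' t := by
  rcases he with ⟨L, hL, hall⟩ | ⟨t₁, t₂, ht, hor⟩
  · exact Or.inl ⟨L, hL, fun p hp => by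
      rcases hall p hp with ⟨tj, h1, h2⟩; exact ⟨tj, h1, h tj h2⟩⟩
  · exact Or.inr ⟨t₁, t₂, ht, hor.imp (h t₁) (h t₂)⟩

lemma TpEmpty.unfold {t : String} (h : TpEmpty Sg t) : EmptyUnf Sg (TpEmpty Sg) t := by
  rcases h with ⟨S, hS, hSt⟩
  exact EmptyUnf.mono (fun x hx => ⟨S, hS, hx⟩) (hS t hSt)

lemma PosSubUnf.mono {P N P' N' : String → String → Prop}
    (hP : ∀ a b, P a b → P' a b) (hN : ∀ a b, N a b → N' a b) {t u : String}
    (h : PosSubUnf Sg P N t u) : PosSubUnf Sg P' N' t u := by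
  rcases h with ⟨t₁, t₂, u₁, u₂, h1, h2, h3, h4⟩ | h | ⟨L, K, h1, h2, h3⟩ |
    ⟨s, r, h1, h2, h3⟩ | h
  · exact Or.inl ⟨t₁, t₂, u₁, u₂, h1, h2, hP _ _ h3, hP _ _ h4⟩
  · exact Or.inr (Or.inl h)
  · refine Or.inr (Or.inr (Or.inl ⟨L, K, h1, h2, fun p hp => ?_⟩))
    rcases h3 p hp with ⟨tj, he, hc⟩
    exact ⟨tj, he, hc.imp id (fun ⟨uj, hl, hpp⟩ => ⟨uj, hl, hP _ _ hpp⟩)⟩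
  · exact Or.inr (Or.inr (Or.inr (Or.inl ⟨s, r, h1, h2, hN _ _ h3⟩)))
  · exact Or.inr (Or.inr (Or.inr (Or.inr h)))

lemma NegSubUnf.mono {P N P' N' : String → String → Prop}
    (hP : ∀ a b, P a b → P' a b) (hN : ∀ a b, N a b → N' a b) {s r : String}
    (h : NegSubUnf Sg P N s r) : NegSubUnf Sg P' N' s r := by
  rcases h with ⟨t₁, s₂, u₁, r₂, h1, h2, h3, h4⟩ | ⟨t, u, h1, h2, h3⟩ |
    ⟨L, K, h1, h2, h3⟩ | h | h
  · exact Or.inl ⟨t₁, s₂, u₁, r₂, h1, h2, hP _ _ h3, hN _ _ h4⟩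
  · exact Or.inr (Or.inl ⟨t, u, h1, h2, hP _ _ h3⟩)
  · refine Or.inr (Or.inr (Or.inl ⟨L, K, h1, h2, fun p hp => ?_⟩))
    rcases h3 p hp with ⟨rj, he, sj, hl, hn⟩
    exact ⟨rj, he, sj, hl, hN _ _ hn⟩
  · exact Or.inr (Or.inr (Or.inr (Or.inl h)))
  · exact Or.inr (Or.inr (Or.inr (Or.inr h)))

lemma PosSub.unfold {t u : String} (h : PosSub Sg t u) :
    PosSubUnf Sg (PosSub Sg) (NegSub Sg) t u := by
  rcases h with ⟨P, N, hP, hN, hPtu⟩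
  exact PosSubUnf.mono (fun a b hab => ⟨P, N, hP, hN, hab⟩)
    (fun a b hab => ⟨P, N, hP, hN, hab⟩) (hP t u hPtu)

lemma NegSub.unfold {s r : String} (h : NegSub Sg s r) :
    NegSubUnf Sg (PosSub Sg) (NegSub Sg) s r := by
  rcases h with ⟨P, N, hP, hN, hNsr⟩
  exact NegSubUnf.mono (fun a b hab => ⟨P, N, hP, hN, hab⟩)
    (fun a b hab => ⟨P, N, hP, hN, hab⟩) (hN s r hNsr)

/-- Emptiness propagates down along subtyping. -/
lemma empty_of_sub {a b : String} (hs : PosSub Sg a b) (he : TpEmpty Sg b) :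
    TpEmpty Sg a := by
  refine ⟨fun x => TpEmpty Sg x ∨ ∃ y, PosSub Sg x y ∧ TpEmpty Sg y, ?_,
    Or.inr ⟨b, hs, he⟩⟩
  rintro u (hu | ⟨v, huv, hv⟩)
  · exact EmptyUnf.mono (fun x => Or.inl) hu.unfold
  · have hunf := huv.unfold
    have hvu := hv.unfold
    rcases hunf with ⟨t₁, t₂, u₁, u₂, h1, h2, h3, h4⟩ | ⟨h1, h2⟩ |
      ⟨L, K, h1, h2, h3⟩ | ⟨s, r, h1, h2, h3⟩ | h
    · -- u tensor, v tensor
      rcases hvu with ⟨L, hL, _⟩ | ⟨v₁, v₂, hv', hor⟩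
      · rw [h2] at hL; exact absurd hL (by simp)
      · rw [h2] at hv'
        injection hv' with e1 e2
        injection e1 with e1; injection e2 with e2
        subst e1; subst e2
        refine Or.inr ⟨t₁, t₂, h1, ?_⟩
        exact hor.imp (fun hh => Or.inr ⟨u₁, h3, hh⟩) (fun hh => Or.inr ⟨u₂, h4, hh⟩)
    · rcases hvu with ⟨L, hL, _⟩ | ⟨v₁, v₂, hv', _⟩
      · rw [h2] at hL; exact absurd hL (by simp)
      · rw [h2] at hv'; exact absurd hv' (by simp)
    · rcases hvu with ⟨K', hK', hall⟩ | ⟨v₁, v₂, hv', _⟩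
      · rw [h2] at hK'
        injection hK' with e; subst e
        refine Or.inl ⟨L, h1, fun p hp => ?_⟩
        rcases h3 p hp with ⟨tj, he', hc⟩
        refine ⟨tj, he', ?_⟩
        rcases hc with hc | ⟨uj, hl, hsub⟩
        · exact Or.inl hc
        · have hmem := mem_of_lookup hl
          rcases hall _ hmem with ⟨tj', he'', hte⟩
          injection he'' with e; subst e
          exact Or.inr ⟨uj, hsub, hte⟩
      · rw [h2] at hv'; exact absurd hv' (by simp)
    · rcases hvu with ⟨L, hL, _⟩ | ⟨v₁, v₂, hv', _⟩
      · rw [h2] at hL; exact absurd hL (by simp)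
      · rw [h2] at hv'; exact absurd hv' (by simp)
    · exact EmptyUnf.mono (fun x => Or.inl) h.unfold

/-- Fullness propagates up along subtyping. -/
lemma full_of_sub {s r : String} (hf : TpFull Sg s) (hs : NegSub Sg s r) :
    TpFull Sg r := by
  have hunf := hs.unfold
  rcases hunf with ⟨t₁, s₂, u₁, r₂, h1, h2, h3, h4⟩ | ⟨t, u, h1, h2, h3⟩ |
    ⟨L, K, h1, h2, h3⟩ | ⟨t, h1, h2⟩ | h
  · rcases hf with ⟨t₁', s₂', hf1, hf2⟩ | hf'
    · rw [h1] at hf1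
      injection hf1 with e1 e2
      injection e1 with e1; subst e1
      exact Or.inl ⟨u₁, r₂, h2, empty_of_sub h3 hf2⟩
    · rw [h1] at hf'; exact absurd hf' (by simp)
  · rcases hf with ⟨t₁', s₂', hf1, _⟩ | hf'
    · rw [h1] at hf1; exact absurd hf1 (by simp)
    · rw [h1] at hf'; exact absurd hf' (by simp)
  · rcases hf with ⟨t₁', s₂', hf1, _⟩ | hf'
    · rw [h1] at hf1; exact absurd hf1 (by simp)
    · rw [h1] at hf'
      injection hf' with e; subst e
      right
      rw [h2]
      congr 1
      rcases K with _ | ⟨p, K⟩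
      · rfl
      · rcases h3 p List.mem_cons_self with ⟨rj, _, sj, hl, _⟩
        simp [List.lookup] at hl
  · rcases hf with ⟨t₁', s₂', hf1, _⟩ | hf'
    · rw [h1] at hf1; exact absurd hf1 (by simp)
    · rw [h1] at hf'; exact absurd hf' (by simp)
  · exact h

end Helpers

/-- Reflexivity and transitivity of syntactic subtyping over a signature in
normal form:
(1) `t ≤ t` and `s ≤ s` for all positive type names `t` and negative type
    names `s` defined in the signature;
(2) if `t₁ ≤ t₂` and `t₂ ≤ t₃` then `t₁ ≤ t₃`;
(3) if `s₁ ≤ s₂` and `s₂ ≤ s₃` then `s₁ ≤ s₃`. -/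
theorem subtyping_refl_trans (Sg : Signature) (hN : SigNormal Sg) :
    ((∀ t : String, PosSub Sg t t) ∧ (∀ s : String, NegSub Sg s s)) ∧
    (∀ t₁ t₂ t₃ : String, PosSub Sg t₁ t₂ → PosSub Sg t₂ t₃ → PosSub Sg t₁ t₃) ∧
    (∀ s₁ s₂ s₃ : String, NegSub Sg s₁ s₂ → NegSub Sg s₂ s₃ → NegSub Sg s₁ s₃) := by
  obtain ⟨hNp, hNn⟩ := hN
  -- Reflexivity: use the diagonal as the coinduction invariant.
  have hPrefl : ∀ a b : String, a = b →
      PosSubUnf Sg (fun x y => x = y) (fun x y => x = y) a b := by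
    rintro a _ rfl
    have hn := hNp a
    rcases hpos : Sg.pos a with ⟨τ₁, τ₂⟩ | _ | L | σ
    · rw [hpos] at hn
      rcases hn with ⟨⟨t₁, ht₁⟩, ⟨t₂, ht₂⟩⟩
      subst ht₁; subst ht₂
      exact Or.inl ⟨t₁, t₂, t₁, t₂, hpos, hpos, rfl, rfl⟩
    · exact Or.inr (Or.inl ⟨hpos, hpos⟩)
    · rw [hpos] at hn
      refine Or.inr (Or.inr (Or.inl ⟨L, L, hpos, hpos, fun p hp => ?_⟩))
      rcases hn.1 p hp with ⟨tj, htj⟩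
      exact ⟨tj, htj, Or.inr ⟨tj, by rw [lookup_eq_of_mem hn.2 hp, htj], rfl⟩⟩
    · rw [hpos] at hn
      rcases hn with ⟨s, hs⟩
      subst hs
      exact Or.inr (Or.inr (Or.inr (Or.inl ⟨s, s, hpos, hpos, rfl⟩)))
  have hNrefl : ∀ a b : String, a = b →
      NegSubUnf Sg (fun x y => x = y) (fun x y => x = y) a b := by
    rintro a _ rfl
    have hn := hNn a
    rcases hneg : Sg.neg a with ⟨τ, σ⟩ | L | τ
    · rw [hneg] at hn
      rcases hn with ⟨⟨t, ht⟩, ⟨s, hs⟩⟩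
      subst ht; subst hs
      exact Or.inl ⟨t, s, t, s, hneg, hneg, rfl, rfl⟩
    · rw [hneg] at hn
      refine Or.inr (Or.inr (Or.inl ⟨L, L, hneg, hneg, fun p hp => ?_⟩))
      rcases hn.1 p hp with ⟨rj, hrj⟩
      exact ⟨rj, hrj, rj, by rw [lookup_eq_of_mem hn.2 hp, hrj], rfl⟩
    · rw [hneg] at hn
      rcases hn with ⟨t, ht⟩
      subst ht
      exact Or.inr (Or.inl ⟨t, t, hneg, hneg, rfl⟩)
  have hreflP : ∀ t : String, PosSub Sg t t :=
    fun t => ⟨fun x y => x = y, fun x y => x = y, hPrefl, hNrefl, rfl⟩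
  have hreflN : ∀ s : String, NegSub Sg s s :=
    fun s => ⟨fun x y => x = y, fun x y => x = y, hPrefl, hNrefl, rfl⟩
  -- Transitivity: the relational composition is a post-fixed point.
  set P2 : String → String → Prop :=
    fun a c => ∃ b, PosSub Sg a b ∧ PosSub Sg b c with hP2
  set N2 : String → String → Prop :=
    fun a c => ∃ b, NegSub Sg a b ∧ NegSub Sg b c with hN2
  have hP2step : ∀ a c, P2 a c → PosSubUnf Sg P2 N2 a c := by
    rintro a c ⟨b, hab, hbc⟩
    have h1 := hab.unfold
    have h2 := hbc.unfold
    rcases h1 with ⟨t₁, t₂, u₁, u₂, e1, e2, p1, p2⟩ | ⟨e1, e2⟩ |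
      ⟨L, K, e1, e2, hall⟩ | ⟨s, r, e1, e2, hn⟩ | hemp
    · -- a,b tensors
      rcases h2 with ⟨t₁', t₂', u₁', u₂', f1, f2, q1, q2⟩ | ⟨f1, f2⟩ |
        ⟨L', K', f1, f2, _⟩ | ⟨s', r', f1, f2, _⟩ | hemp2
      · rw [e2] at f1
        injection f1 with g1 g2
        injection g1 with g1; injection g2 with g2
        subst g1; subst g2
        exact Or.inl ⟨t₁, t₂, u₁', u₂', e1, f2, ⟨u₁, p1, q1⟩, ⟨u₂, p2, q2⟩⟩
      · rw [e2] at f1; exact absurd f1 (by simp)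
      · rw [e2] at f1; exact absurd f1 (by simp)
      · rw [e2] at f1; exact absurd f1 (by simp)
      · exact Or.inr (Or.inr (Or.inr (Or.inr
          (empty_of_sub hab hemp2))))
    · -- a,b one
      rcases h2 with ⟨t₁', t₂', u₁', u₂', f1, f2, _, _⟩ | ⟨f1, f2⟩ |
        ⟨L', K', f1, f2, _⟩ | ⟨s', r', f1, f2, _⟩ | hemp2
      · rw [e2] at f1; exact absurd f1 (by simp)
      · exact Or.inr (Or.inl ⟨e1, f2⟩)
      · rw [e2] at f1; exact absurd f1 (by simp)
      · rw [e2] at f1; exact absurd f1 (by simp)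
      · exact Or.inr (Or.inr (Or.inr (Or.inr (empty_of_sub hab hemp2))))
    · -- a,b plus
      rcases h2 with ⟨t₁', t₂', u₁', u₂', f1, f2, _, _⟩ | ⟨f1, f2⟩ |
        ⟨L', K', f1, f2, hall'⟩ | ⟨s', r', f1, f2, _⟩ | hemp2
      · rw [e2] at f1; exact absurd f1 (by simp)
      · rw [e2] at f1; exact absurd f1 (by simp)
      · rw [e2] at f1
        injection f1 with g; subst g
        refine Or.inr (Or.inr (Or.inl ⟨L, K', e1, f2, fun p hp => ?_⟩))
        rcases hall p hp with ⟨tj, he, hc⟩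
        refine ⟨tj, he, ?_⟩
        rcases hc with hc | ⟨uj, hl, hsub⟩
        · exact Or.inl hc
        · have hmem := mem_of_lookup hl
          rcases hall' _ hmem with ⟨tj', he', hc'⟩
          injection he' with g; subst g
          rcases hc' with hc' | ⟨vj, hl', hsub'⟩
          · exact Or.inl (empty_of_sub hsub hc')
          · exact Or.inr ⟨vj, hl', ⟨uj, hsub, hsub'⟩⟩
      · rw [e2] at f1; exact absurd f1 (by simp)
      · exact Or.inr (Or.inr (Or.inr (Or.inr (empty_of_sub hab hemp2))))
    · -- a,b down
      rcases h2 with ⟨t₁', t₂', u₁', u₂', f1, f2, _, _⟩ | ⟨f1, f2⟩ |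
        ⟨L', K', f1, f2, _⟩ | ⟨s', r', f1, f2, hn'⟩ | hemp2
      · rw [e2] at f1; exact absurd f1 (by simp)
      · rw [e2] at f1; exact absurd f1 (by simp)
      · rw [e2] at f1; exact absurd f1 (by simp)
      · rw [e2] at f1
        injection f1 with g; injection g with g; subst g
        exact Or.inr (Or.inr (Or.inr (Or.inl ⟨s, r', e1, f2, ⟨r, hn, hn'⟩⟩)))
      · exact Or.inr (Or.inr (Or.inr (Or.inr (empty_of_sub hab hemp2))))
    · exact Or.inr (Or.inr (Or.inr (Or.inr hemp)))
  have hN2step : ∀ a c, N2 a c → NegSubUnf Sg P2 N2 a c := by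
    rintro a c ⟨b, hab, hbc⟩
    have h1 := hab.unfold
    have h2 := hbc.unfold
    -- handle escape rules of h1 first
    rcases h1 with ⟨t₁, s₂, u₁, r₂, e1, e2, p1, n1⟩ | ⟨t, u, e1, e2, p1⟩ |
      ⟨L, K, e1, e2, hall⟩ | ⟨t, e1, hemp⟩ | hfull
    · -- a,b arrows
      rcases h2 with ⟨t₁', s₂', u₁', r₂', f1, f2, q1, n2⟩ | ⟨t', u', f1, f2, _⟩ |
        ⟨L', K', f1, f2, _⟩ | ⟨t', f1, hemp2⟩ | hfull2
      · rw [e2] at f1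
        injection f1 with g1 g2
        injection g1 with g1; injection g2 with g2
        subst g1; subst g2
        exact Or.inl ⟨t₁, s₂, u₁', r₂', e1, f2, ⟨u₁, q1, p1⟩, ⟨r₂, n1, n2⟩⟩
      · rw [e2] at f1; exact absurd f1 (by simp)
      · rw [e2] at f1; exact absurd f1 (by simp)
      · rw [e2] at f1; exact absurd f1 (by simp)
      · exact Or.inr (Or.inr (Or.inr (Or.inr hfull2)))
    · -- a,b up
      rcases h2 with ⟨t₁', s₂', u₁', r₂', f1, f2, _, _⟩ | ⟨t', u', f1, f2, q1⟩ |
        ⟨L', K', f1, f2, _⟩ | ⟨t', f1, hemp2⟩ | hfull2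
      · rw [e2] at f1; exact absurd f1 (by simp)
      · rw [e2] at f1
        injection f1 with g; injection g with g; subst g
        exact Or.inr (Or.inl ⟨t, u', e1, f2, ⟨u, p1, q1⟩⟩)
      · rw [e2] at f1; exact absurd f1 (by simp)
      · rw [e2] at f1
        injection f1 with g; injection g with g; subst g
        exact Or.inr (Or.inr (Or.inr (Or.inl ⟨t, e1, empty_of_sub p1 hemp2⟩)))
      · exact Or.inr (Or.inr (Or.inr (Or.inr hfull2)))
    · -- a,b withRec
      rcases h2 with ⟨t₁', s₂', u₁', r₂', f1, f2, _, _⟩ | ⟨t', u', f1, f2, _⟩ |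
        ⟨L', K', f1, f2, hall'⟩ | ⟨t', f1, _⟩ | hfull2
      · rw [e2] at f1; exact absurd f1 (by simp)
      · rw [e2] at f1; exact absurd f1 (by simp)
      · rw [e2] at f1
        injection f1 with g; subst g
        refine Or.inr (Or.inr (Or.inl ⟨L, K', e1, f2, fun p hp => ?_⟩))
        rcases hall' p hp with ⟨rj, he, sj, hl, hn'⟩
        have hmem := mem_of_lookup hl
        rcases hall _ hmem with ⟨rj', he', sj', hl', hn''⟩
        injection he' with g; subst g
        exact ⟨rj, he, sj', hl', ⟨sj, hn'', hn'⟩⟩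
      · rw [e2] at f1; exact absurd f1 (by simp)
      · exact Or.inr (Or.inr (Or.inr (Or.inr hfull2)))
    · -- a = ↑t with t empty
      exact Or.inr (Or.inr (Or.inr (Or.inl ⟨t, e1, hemp⟩)))
    · -- b full
      exact Or.inr (Or.inr (Or.inr (Or.inr (full_of_sub hfull hbc))))
  refine ⟨⟨hreflP, hreflN⟩, ?_, ?_⟩
  · exact fun t₁ t₂ t₃ h1 h2 => ⟨P2, N2, hP2step, hN2step, ⟨t₂, h1, h2⟩⟩
  · exact fun s₁ s₂ s₃ h1 h2 => ⟨P2, N2, hP2step, hN2step, ⟨s₂, h1, h2⟩⟩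

end CBPV
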